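/- Let π̂, π̃, π̂⁺ be probability distributions on a finite set A, with π̃ = (1-θ)π̂ + θu for θ ∈ [0,1] and u uniform. Suppose Q : A → R satisfies ||Q||_∞ ≤ 2H and ||π̂⁺ - π̃||_1 ≤ 2αH·c for constants α > 0, H ≥ 0, c ≥ 1. Then ⟨π̂ - π̂⁺, Q⟩ - (1/α)D(π̂⁺||π̃) ≤ 2αH² + 4Hθ, assuming the KL bound D(π̂⁺||π̃) ≥ (1/2)||π̂⁺ - π̃||_1². -/

import Mathlib

open Finset

theorem policy_update_regret_term_bound (A : Type*) [Fintype A] [Nonempty A]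
    (πh πt πp : A → ℝ) (θ α H c : ℝ)
    (hθ0 : 0 ≤ θ) (hθ1 : θ ≤ 1) (hα : 0 < α) (hH : 0 ≤ H) (hc : 1 ≤ c)
    (hπhpos : ∀ a, 0 ≤ πh a) (hπhsum : ∑ a, πh a = 1)
    (hπppos : ∀ a, 0 ≤ πp a) (hπpsum : ∑ a, πp a = 1)
    (hmix : ∀ a, πt a = (1 - θ) * πh a + θ * (1 / (Fintype.card A : ℝ)))
    (Q : A → ℝ) (hQ : ∀ a, |Q a| ≤ 2 * H)
    (hl1 : ∑ a, |πp a - πt a| ≤ 2 * α * H * c)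
    (hpinsker : (1 / 2) * (∑ a, |πp a - πt a|) ^ 2 ≤
      ∑ a, πp a * Real.log (πp a / πt a)) :
    (∑ a, (πh a - πp a) * Q a)
      - (1 / α) * ∑ a, πp a * Real.log (πp a / πt a) ≤
      2 * α * H ^ 2 + 4 * H * θ := by
  set x := ∑ a, |πp a - πt a| with hx
  have hx0 : 0 ≤ x := Finset.sum_nonneg fun a _ => abs_nonneg _
  have hcard : (0 : ℝ) < (Fintype.card A : ℝ) := by
    exact_mod_cast Fintype.card_pos
  have hunif : ∑ _a : A, (1 / (Fintype.card A : ℝ)) = 1 := by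
    rw [Finset.sum_const, Finset.card_univ, nsmul_eq_mul]
    field_simp
  -- split the sum
  have hsplit : ∑ a, (πh a - πp a) * Q a
      = (∑ a, (πh a - πt a) * Q a) + ∑ a, (πt a - πp a) * Q a := by
    rw [← Finset.sum_add_distrib]
    congr 1; ext a; ring
  have h1 : ∑ a, (πh a - πt a) * Q a ≤ 4 * H * θ := by
    calc ∑ a, (πh a - πt a) * Q a ≤ ∑ a, |(πh a - πt a) * Q a| :=
          Finset.sum_le_sum fun a _ => le_abs_self _
      _ ≤ ∑ a, (θ * (πh a + 1 / (Fintype.card A : ℝ))) * (2 * H) := by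
          apply Finset.sum_le_sum; intro a _
          rw [abs_mul]
          apply mul_le_mul ?g1 (hQ a) (abs_nonneg _) ?g2
          case g1 =>
            have heq : πh a - πt a = θ * (πh a - 1 / (Fintype.card A : ℝ)) := by
              rw [hmix a]; ring
            rw [heq, abs_mul, abs_of_nonneg hθ0]
            apply mul_le_mul_of_nonneg_left _ hθ0
            have h1n : 0 ≤ 1 / (Fintype.card A : ℝ) := by positivity
            rw [abs_sub_le_iff]
            constructor <;> nlinarith [hπhpos a]
          case g2 =>
            have := hπhpos a
            positivity
      _ = θ * ((∑ a, πh a) + ∑ _a : A, (1 / (Fintype.card A : ℝ))) * (2 * H) := by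
          rw [← Finset.sum_mul, ← Finset.mul_sum, Finset.sum_add_distrib]
      _ = 4 * H * θ := by rw [hπhsum, hunif]; ring
  have h2 : ∑ a, (πt a - πp a) * Q a ≤ 2 * H * x := by
    calc ∑ a, (πt a - πp a) * Q a ≤ ∑ a, |πp a - πt a| * (2 * H) := by
          apply Finset.sum_le_sum; intro a _
          calc (πt a - πp a) * Q a ≤ |(πt a - πp a) * Q a| := le_abs_self _
            _ = |πp a - πt a| * |Q a| := by rw [abs_mul, abs_sub_comm]
            _ ≤ |πp a - πt a| * (2 * H) :=
                mul_le_mul_of_nonneg_left (hQ a) (abs_nonneg _)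
      _ = x * (2 * H) := by rw [← Finset.sum_mul]
      _ = 2 * H * x := by ring
  have hKL : (1 / 2) * x ^ 2 ≤ ∑ a, πp a * Real.log (πp a / πt a) := hpinsker
  have heq : (1 / α) * ((1 / 2) * x ^ 2) = x ^ 2 / (2 * α) := by
    field_simp
  have h3 : 2 * H * x - 2 * α * H ^ 2 ≤ x ^ 2 / (2 * α) := by
    rw [le_div_iff₀ (by positivity)]
    nlinarith [sq_nonneg (x - 2 * α * H)]
  have hfinal : 2 * H * x - (1 / α) * ((1 / 2) * x ^ 2) ≤ 2 * α * H ^ 2 := by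
    rw [heq]; linarith
  have hp : (0:ℝ) ≤ 1 / α := by positivity
  have hmono := mul_le_mul_of_nonneg_left hKL hp
  linarith
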